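/- arXiv:1003.3220 — 7 statements merged into one kernel-verified Lean document; each statement's English description precedes it below -/
import Mathlib

section
/- Let φ assign to each a ∈ GL(n,ℝ) a real array φ(a)^i_{jk} symmetric in j,k, and suppose φ satisfies the cocycle identity φ(ab)^i_{jk} = Σ_s a^i_s φ(b)^s_{jk} + Σ_{s,t} φ(a)^i_{st} b^s_j b^t_k for all a,b ∈ GL(n,ℝ). Then for every real λ with λ ≠ 0 and λ ≠ 1, and every b ∈ GL(n,ℝ), φ(b)^i_{jk} = (1/(λ² − λ)) · ( Σ_{s,t} φ(λI)^i_{st} b^s_j b^t_k − Σ_s b^i_s φ(λI)^s_{jk} ). In particular φ(b) is a quadratic polynomial in the entries of b. -/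
open Matrix BigOperators

noncomputable section

/-- n×n real matrices (first component of a 2-jet). -/
abbrev Mat (n : ℕ) := Matrix (Fin n) (Fin n) ℝ

/-- Real arrays a^i_{jk} (second component of a 2-jet). -/
abbrev Arr (n : ℕ) := Fin n → Fin n → Fin n → ℝ

/-- An element of the model of G₂(n): a pair (a₁, a₂). -/
abbrev Jet (n : ℕ) := Mat n × Arr n

/-- Symmetry of an array in its two lower indices. -/
def SymArr {n : ℕ} (c : Arr n) : Prop := ∀ i j k, c i j k = c i k j

/-- Membership in G₂(n): invertible first component, symmetric second component. -/
def IsJet {n : ℕ} (a : Jet n) : Prop := IsUnit a.1 ∧ SymArr a.2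

/-- The multiplication of G₂(n):
`(a·b)₁ = a₁ b₁`, `(a·b)₂^i_{jk} = Σ_s a₁^i_s b₂^s_{jk} + Σ_{s,t} a₂^i_{st} b₁^s_j b₁^t_k`. -/
def jmul {n : ℕ} (a b : Jet n) : Jet n :=
  (a.1 * b.1,
   fun i j k => (∑ s, a.1 i s * b.2 s j k) + ∑ s, ∑ t, a.2 i s t * b.1 s j * b.1 t k)

/-- The identity candidate (I, 0). -/
def jone (n : ℕ) : Jet n := ((1 : Mat n), fun _ _ _ => 0)

/-- a cocycle φ on GL(n,ℝ) is given by the explicit quadratic formula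
in terms of φ(λI), for every λ ≠ 0, 1. -/
theorem g2_cocycle_formula (n : ℕ) (hn : 1 ≤ n) (φ : Mat n → Arr n)
    (hsym : ∀ a : Mat n, IsUnit a → SymArr (φ a))
    (hcoc : ∀ a b : Mat n, IsUnit a → IsUnit b → ∀ i j k,
      φ (a * b) i j k =
        (∑ s, a i s * φ b s j k) + ∑ s, ∑ t, φ a i s t * b s j * b t k) :
    ∀ lam : ℝ, lam ≠ 0 → lam ≠ 1 → ∀ b : Mat n, IsUnit b → ∀ i j k,
      φ b i j k =
        (1 / (lam ^ 2 - lam)) *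
          ((∑ s, ∑ t, φ (lam • (1 : Mat n)) i s t * b s j * b t k) -
            ∑ s, b i s * φ (lam • (1 : Mat n)) s j k) := by
  intro lam hl0 hl1 b hb i j k
  have hc : IsUnit (lam • (1 : Mat n)) := by
    have h := (isUnit_iff_ne_zero.mpr hl0).map (algebraMap ℝ (Mat n))
    rwa [Algebra.algebraMap_eq_smul_one] at h
  have h1 := hcoc (lam • (1 : Mat n)) b hc hb i j k
  have h2 := hcoc b (lam • (1 : Mat n)) hb hc i j k
  rw [smul_mul_assoc, one_mul] at h1
  rw [mul_smul_comm, mul_one] at h2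
  have e1 : (∑ s, (lam • (1 : Mat n)) i s * φ b s j k) = lam * φ b i j k := by
    simp [Matrix.smul_apply, Matrix.one_apply, ite_mul, mul_assoc]
  have e2 : (∑ s, ∑ t, φ b i s t * (lam • (1 : Mat n)) s j * (lam • (1 : Mat n)) t k)
      = lam ^ 2 * φ b i j k := by
    simp [Matrix.smul_apply, Matrix.one_apply, mul_ite, Finset.mul_sum]
    ring
  rw [e1] at h1
  rw [e2] at h2
  have key : lam * φ b i j k + (∑ s, ∑ t, φ (lam • (1 : Mat n)) i s t * b s j * b t k)
      = (∑ s, b i s * φ (lam • (1 : Mat n)) s j k) + lam ^ 2 * φ b i j k := by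
    rw [← h1, ← h2]
  have hne : lam ^ 2 - lam ≠ 0 := by
    have : lam * (lam - 1) ≠ 0 := mul_ne_zero hl0 (sub_ne_zero.mpr hl1)
    intro h; apply this; rw [← h]; ring
  field_simp
  linarith [key]
end
end

section
/- Let φ assign to each a ∈ GL(n,ℝ) a real array φ(a)^i_{jk} symmetric in j,k, satisfying φ(ab)^i_{jk} = Σ_s a^i_s φ(b)^s_{jk} + Σ_{s,t} φ(a)^i_{st} b^s_j b^t_k for all a,b ∈ GL(n,ℝ). Then the array k(λ) := φ(λI)/(λ² − λ) is independent of λ: for all λ, μ ∈ ℝ \ {0,1}, φ(λI)/(λ² − λ) = φ(μI)/(μ² − μ). -/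
open Matrix BigOperators

noncomputable section

lemma unit_smul_one {n : ℕ} {lam : ℝ} (h : lam ≠ 0) : IsUnit (lam • (1 : Mat n)) := by
  have := (isUnit_iff_ne_zero.mpr h).map (algebraMap ℝ (Mat n))
  rwa [Algebra.algebraMap_eq_smul_one] at this

lemma coc_scalar {n : ℕ} (φ : Mat n → Arr n)
    (hcoc : ∀ a b : Mat n, IsUnit a → IsUnit b → ∀ i j k,
      φ (a * b) i j k =
        (∑ s, a i s * φ b s j k) + ∑ s, ∑ t, φ a i s t * b s j * b t k)
    {lam mu : ℝ} (hl : lam ≠ 0) (hm : mu ≠ 0) (i j k : Fin n) :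
    φ ((lam * mu) • (1 : Mat n)) i j k
      = lam * φ (mu • (1 : Mat n)) i j k + mu ^ 2 * φ (lam • (1 : Mat n)) i j k := by
  have h := hcoc (lam • 1) (mu • 1) (unit_smul_one hl) (unit_smul_one hm) i j k
  rw [smul_mul_smul_comm, one_mul] at h
  rw [h]
  congr 1
  · simp [Matrix.smul_apply, Matrix.one_apply, ite_mul, mul_ite]
  · simp [Matrix.smul_apply, Matrix.one_apply, ite_mul, mul_ite, Finset.mul_sum]
    ring

lemma sq_sub_ne {lam : ℝ} (h0 : lam ≠ 0) (h1 : lam ≠ 1) : lam ^ 2 - lam ≠ 0 := by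
  intro h
  have : lam * (lam - 1) = 0 := by ring_nf; linarith
  rcases mul_eq_zero.mp this with h' | h'
  · exact h0 h'
  · exact h1 (by linarith)

/-- for a cocycle φ on GL(n,ℝ), the array φ(λI)/(λ²−λ) is independent
of λ ∈ ℝ \ {0,1}. -/
theorem g2_cocycle_scalar_indep (n : ℕ) (hn : 1 ≤ n) (φ : Mat n → Arr n)
    (hsym : ∀ a : Mat n, IsUnit a → SymArr (φ a))
    (hcoc : ∀ a b : Mat n, IsUnit a → IsUnit b → ∀ i j k,
      φ (a * b) i j k =
        (∑ s, a i s * φ b s j k) + ∑ s, ∑ t, φ a i s t * b s j * b t k) :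
    ∀ lam mu : ℝ, lam ≠ 0 → lam ≠ 1 → mu ≠ 0 → mu ≠ 1 → ∀ i j k,
      φ (lam • (1 : Mat n)) i j k / (lam ^ 2 - lam) =
        φ (mu • (1 : Mat n)) i j k / (mu ^ 2 - mu) := by
  intro lam mu h0 h1 m0 m1 i j k
  have e1 := coc_scalar φ hcoc h0 m0 i j k
  have e2 := coc_scalar φ hcoc m0 h0 i j k
  rw [mul_comm mu lam] at e2
  rw [div_eq_div_iff (sq_sub_ne h0 h1) (sq_sub_ne m0 m1)]
  have := e1.symm.trans e2
  nlinarith [this]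
end
end

section
/- Every splitting of π over GL(n,ℝ) is conjugate to ε by a kernel element: if σ : GL(n,ℝ) → G₂(n) is a group homomorphism with π∘σ = id, then there exists a real array k with k^i_{jk} = k^i_{kj} such that σ(b) = (I,k)·(b,0)·(I,−k) for all b ∈ GL(n,ℝ). -/
open Matrix BigOperators

noncomputable section

private lemma sum_delta2 {n : ℕ} (j l : Fin n) (f : Fin n → Fin n → ℝ) :
    (∑ x : Fin n, ∑ y : Fin n, if x = j then if y = l then f x y else 0 else 0) = f j l := by
  rw [Finset.sum_comm]
  simp [Finset.sum_ite_eq, Finset.sum_ite_eq']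

/-- every splitting σ of π over GL(n,ℝ) is conjugate to ε = (·,0) by a
kernel element (I,k): σ(b) = (I,k)·(b,0)·(I,−k). -/
theorem g2_splitting_conjugate (n : ℕ) (hn : 1 ≤ n) (σ : Mat n → Jet n)
    (hσjet : ∀ a : Mat n, IsUnit a → IsJet (σ a))
    (hσsec : ∀ a : Mat n, IsUnit a → (σ a).1 = a)
    (hσhom : ∀ a b : Mat n, IsUnit a → IsUnit b → σ (a * b) = jmul (σ a) (σ b)) :
    ∃ k : Arr n, SymArr k ∧ ∀ b : Mat n, IsUnit b →
      σ b = jmul (jmul (((1 : Mat n), k) : Jet n) ((b, fun _ _ _ => 0) : Jet n))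
              (((1 : Mat n), fun i j l => -(k i j l)) : Jet n) := by
  classical
  set c : Mat n := (2:ℝ) • (1 : Mat n) with hc
  have hcu : IsUnit c := by
    refine ⟨⟨c, (2:ℝ)⁻¹ • (1 : Mat n), ?_, ?_⟩, rfl⟩
    · rw [hc, smul_mul_smul_comm]; norm_num
    · rw [smul_mul_smul_comm]; norm_num
  set T : Arr n := (σ c).2 with hT
  refine ⟨fun i j l => T i j l / 2, ?_, ?_⟩
  · intro i j l
    have hs := (hσjet c hcu).2 i j l
    rw [← hT] at hs
    show T i j l / 2 = T i l j / 2
    rw [hs]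
  · intro b hb
    have hcomm : c * b = b * c := by
      rw [hc, smul_mul_assoc, mul_smul_comm, one_mul, mul_one]
    have heq : jmul (σ c) (σ b) = jmul (σ b) (σ c) := by
      rw [← hσhom c b hcu hb, ← hσhom b c hb hcu, hcomm]
    have hce : ∀ i s : Fin n, c i s = 2 * (if i = s then (1:ℝ) else 0) := by
      intro i s
      rw [hc]
      simp [Matrix.one_apply]
    have key : ∀ i j l, (σ b).2 i j l =
        (∑ s, ∑ t, T i s t * b s j * b t l) / 2 - (∑ s, b i s * T s j l) / 2 := by
      intro i j l
      have h2 := congrFun (congrFun (congrFun (congrArg Prod.snd heq) i) j) l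
      simp only [jmul, hσsec c hcu, hσsec b hb, ← hT] at h2
      simp only [hce, mul_ite, ite_mul, mul_one, mul_zero, zero_mul,
        Finset.sum_ite_eq, Finset.sum_ite_eq', Finset.mem_univ, if_true] at h2
      ring_nf at h2 ⊢
      linarith
    refine Prod.ext ?_ ?_
    · simp [jmul, hσsec b hb]
    · funext i j l
      simp only [jmul, Matrix.one_apply, mul_ite, ite_mul, mul_one, mul_zero,
        zero_mul, mul_comm, Finset.sum_ite_eq, Finset.sum_ite_eq',
        Finset.mem_univ, if_true, Finset.sum_const_zero, zero_add, add_zero, one_mul]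
      rw [key i j l]
      have e1 : (∑ s, b i s * -(T s j l / 2)) = -((∑ s, b i s * T s j l) / 2) := by
        rw [Finset.sum_div, ← Finset.sum_neg_distrib]
        exact Finset.sum_congr rfl fun s _ => by ring
      have e2 : (∑ s, ∑ t, b t l * (b s j * (T i s t / 2)))
          = (∑ s, ∑ t, T i s t * b s j * b t l) / 2 := by
        rw [Finset.sum_div]
        refine Finset.sum_congr rfl fun s _ => ?_
        rw [Finset.sum_div]
        exact Finset.sum_congr rfl fun t _ => by ring
      simp only [ite_self, Finset.sum_ite_eq, Finset.sum_ite_eq', Finset.mem_univ,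
        if_true, Finset.sum_const_zero]
      rw [e1, sum_delta2, e2]
      ring
end
end

section
/- (Proposition 3) Let σ₁, σ₂ : GL(n,ℝ) → G₂(n) be two group homomorphisms satisfying π∘σ₁ = id and π∘σ₂ = id. Then there exists an element k ∈ K₂,₁(n) (a kernel element (I,c)) such that σ₁(GL(n,ℝ)) = k · σ₂(GL(n,ℝ)) · k⁻¹, i.e. the images of the two splittings are conjugate subgroups of G₂(n) by an element of the kernel of π. -/
open Matrix BigOperators

noncomputable section

/-- Proposition 3: the images of any two splittings σ₁, σ₂ of π over
GL(n,ℝ) are conjugate subgroups of G₂(n) by an element k = (I,c) of the kernel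
K₂,₁(n): σ₁(GL(n,ℝ)) = k · σ₂(GL(n,ℝ)) · k⁻¹. -/
theorem g2_splittings_images_conjugate (n : ℕ) (hn : 1 ≤ n)
    (σ₁ σ₂ : Mat n → Jet n)
    (h1jet : ∀ a : Mat n, IsUnit a → IsJet (σ₁ a))
    (h1sec : ∀ a : Mat n, IsUnit a → (σ₁ a).1 = a)
    (h1hom : ∀ a b : Mat n, IsUnit a → IsUnit b → σ₁ (a * b) = jmul (σ₁ a) (σ₁ b))
    (h2jet : ∀ a : Mat n, IsUnit a → IsJet (σ₂ a))
    (h2sec : ∀ a : Mat n, IsUnit a → (σ₂ a).1 = a)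
    (h2hom : ∀ a b : Mat n, IsUnit a → IsUnit b → σ₂ (a * b) = jmul (σ₂ a) (σ₂ b)) :
    ∃ c : Arr n, SymArr c ∧
      {x : Jet n | ∃ b : Mat n, IsUnit b ∧ σ₁ b = x} =
        {x : Jet n | ∃ b : Mat n, IsUnit b ∧
          x = jmul (jmul (((1 : Mat n), c) : Jet n) (σ₂ b))
                (((1 : Mat n), fun i j l => -(c i j l)) : Jet n)} := by
  classical
  set z : Mat n := 2 with hz
  have hzapp : ∀ i j : Fin n, z i j = if i = j then (2:ℝ) else 0 := by
    intro i j
    rw [hz, show (2 : Mat n) = 1 + 1 from by norm_num]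
    simp [Matrix.one_apply]
    split <;> norm_num
  have hzu : IsUnit z := by
    refine isUnit_iff_exists.mpr ⟨(2⁻¹ : ℝ) • 1, ?_, ?_⟩ <;>
    · ext i j
      simp only [Matrix.mul_apply, Matrix.smul_apply, Matrix.one_apply, hzapp,
        mul_ite, ite_mul, mul_zero, zero_mul, smul_ite, smul_zero,
        Finset.sum_ite_eq, Finset.sum_ite_eq', Finset.mem_univ, if_true]
      split <;> norm_num
  -- entrywise cocycle identities
  have e1 : ∀ a b : Mat n, IsUnit a → IsUnit b → ∀ i j k,
      (σ₁ (a * b)).2 i j k =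
        (∑ s, a i s * (σ₁ b).2 s j k) + ∑ s, ∑ t, (σ₁ a).2 i s t * b s j * b t k := by
    intro a b ha hb i j k
    rw [h1hom a b ha hb]
    simp [jmul, h1sec a ha, h1sec b hb]
  have e2 : ∀ a b : Mat n, IsUnit a → IsUnit b → ∀ i j k,
      (σ₂ (a * b)).2 i j k =
        (∑ s, a i s * (σ₂ b).2 s j k) + ∑ s, ∑ t, (σ₂ a).2 i s t * b s j * b t k := by
    intro a b ha hb i j k
    rw [h2hom a b ha hb]
    simp [jmul, h2sec a ha, h2sec b hb]
  set c : Arr n := fun i j k => ((σ₁ z).2 i j k - (σ₂ z).2 i j k) / 2 with hc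
  have hsym : SymArr c := by
    intro i j k
    have s1 := (h1jet z hzu).2 i j k
    have s2 := (h2jet z hzu).2 i j k
    simp only [hc, s1, s2]
  refine ⟨c, hsym, ?_⟩
  -- key: Γ₁(a) = Γ₂(a) + c(a,a) - a·c
  have key : ∀ a : Mat n, IsUnit a → ∀ i j k,
      (σ₁ a).2 i j k = (σ₂ a).2 i j k
        + (∑ s, ∑ t, c i s t * a s j * a t k) - ∑ s, a i s * c s j k := by
    intro a ha i j k
    have hza : z * a = a * z := by rw [hz, two_mul, mul_two]
    have hzsum : ∀ f : Fin n → ℝ, (∑ s, z i s * f s) = 2 * f i := by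
      intro f
      simp [hzapp, ite_mul, Finset.sum_ite_eq]
    have hzsum2 : ∀ X : Arr n,
        (∑ s, ∑ t, X i s t * z s j * z t k) = 4 * X i j k := by
      intro X
      simp only [hzapp, mul_ite, ite_mul, mul_zero, zero_mul,
        Finset.sum_ite_eq', Finset.mem_univ, if_true]
      ring
    have E1m := e1 z a hzu ha i j k
    have E2m := e2 z a hzu ha i j k
    rw [hza] at E1m E2m
    have E1r := e1 a z ha hzu i j k
    have E2r := e2 a z ha hzu i j k
    rw [hzsum] at E1m E2m
    rw [hzsum2] at E1r E2r
    -- combine: 2*Γ₁(a) + Σ Γ₁(z)(a,a) = Σ a Γ₁(z) + 4 Γ₁(a), same for Γ₂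
    have EQ1 : 2 * (σ₁ a).2 i j k + (∑ s, ∑ t, (σ₁ z).2 i s t * a s j * a t k)
        = (∑ s, a i s * (σ₁ z).2 s j k) + 4 * (σ₁ a).2 i j k := by
      rw [← E1m, ← E1r]
    have EQ2 : 2 * (σ₂ a).2 i j k + (∑ s, ∑ t, (σ₂ z).2 i s t * a s j * a t k)
        = (∑ s, a i s * (σ₂ z).2 s j k) + 4 * (σ₂ a).2 i j k := by
      rw [← E2m, ← E2r]
    have hcq : ∑ s, ∑ t, c i s t * a s j * a t k
        = ((∑ s, ∑ t, (σ₁ z).2 i s t * a s j * a t k)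
          - (∑ s, ∑ t, (σ₂ z).2 i s t * a s j * a t k)) / 2 := by
      rw [← Finset.sum_sub_distrib, Finset.sum_div]
      refine Finset.sum_congr rfl fun s _ => ?_
      rw [← Finset.sum_sub_distrib, Finset.sum_div]
      refine Finset.sum_congr rfl fun t _ => ?_
      simp only [hc]; ring
    have hcl : ∑ s, a i s * c s j k
        = ((∑ s, a i s * (σ₁ z).2 s j k) - (∑ s, a i s * (σ₂ z).2 s j k)) / 2 := by
      rw [← Finset.sum_sub_distrib, Finset.sum_div]
      refine Finset.sum_congr rfl fun s _ => ?_
      simp only [hc]; ring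
    rw [hcq, hcl]
    linarith
  -- sums against the identity matrix
  have hone1 : ∀ (i : Fin n) (f : Fin n → ℝ), (∑ s, (1 : Mat n) i s * f s) = f i := by
    intro i f
    simp [Matrix.one_apply, ite_mul, Finset.sum_ite_eq]
  have hone2 : ∀ (i j k : Fin n) (X : Arr n),
      (∑ s, ∑ t, X i s t * (1 : Mat n) s j * (1 : Mat n) t k) = X i j k := by
    intro i j k X
    simp only [Matrix.one_apply, mul_ite, ite_mul, mul_zero, zero_mul, mul_one,
      Finset.sum_ite_eq', Finset.mem_univ, if_true]
  -- conjugation computation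
  have conj : ∀ b : Mat n, IsUnit b →
      jmul (jmul (((1 : Mat n), c) : Jet n) (σ₂ b))
        (((1 : Mat n), fun i j l => -(c i j l)) : Jet n) = σ₁ b := by
    intro b hb
    have hb1 := h2sec b hb
    have hb1' := h1sec b hb
    refine Prod.ext ?_ ?_
    · show ((1 : Mat n) * (σ₂ b).1) * 1 = (σ₁ b).1
      rw [hb1, hb1', one_mul, mul_one]
    · funext i j k
      show (∑ s, ((1 : Mat n) * (σ₂ b).1) i s * (-(c s j k)))
          + (∑ s, ∑ t, ((∑ u, (1 : Mat n) i u * (σ₂ b).2 u s t)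
              + ∑ u, ∑ v, c i u v * (σ₂ b).1 u s * (σ₂ b).1 v t)
            * (1 : Mat n) s j * (1 : Mat n) t k)
        = (σ₁ b).2 i j k
      rw [hb1, one_mul]
      rw [hone2 i j k (fun i s t => (∑ u, (1 : Mat n) i u * (σ₂ b).2 u s t)
              + ∑ u, ∑ v, c i u v * b u s * b v t)]
      rw [hone1 i (fun u => (σ₂ b).2 u j k)]
      have hneg : (∑ s, b i s * (-(c s j k))) = -∑ s, b i s * c s j k := by
        simp [mul_neg]
      rw [hneg, key b hb i j k]
      ring
  -- set equality
  ext x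
  simp only [Set.mem_setOf_eq]
  constructor
  · rintro ⟨b, hb, rfl⟩
    exact ⟨b, hb, (conj b hb).symm⟩
  · rintro ⟨b, hb, rfl⟩
    exact ⟨b, hb, (conj b hb).symm⟩
end
end

section
/- Let L be a subgroup of GL(n,ℝ) containing a scalar matrix λI with λ ≠ 0 and λ ≠ 1 (for example L = O(n), which contains −I). Then every group homomorphism σ : L → G₂(n) with π∘σ = id_L is conjugate to the standard splitting by a kernel element: there exists a real array k with k^i_{jk} = k^i_{kj} such that σ(b) = (I,k)·(b,0)·(I,−k) for all b ∈ L. -/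
open Matrix BigOperators

noncomputable section

/-- if L ⊆ GL(n,ℝ) is a subgroup containing a scalar matrix λI with
λ ≠ 0,1, then every splitting σ : L → G₂(n) of π over L is conjugate to the standard
splitting b ↦ (b,0) by a kernel element (I,k). -/
theorem g2_subgroup_splitting_conjugate (n : ℕ) (hn : 1 ≤ n)
    (L : Set (Mat n))
    (hLunit : ∀ a ∈ L, IsUnit a)
    (hLone : (1 : Mat n) ∈ L)
    (hLmul : ∀ a ∈ L, ∀ b ∈ L, a * b ∈ L)
    (hLinv : ∀ a ∈ L, a⁻¹ ∈ L)
    (lam : ℝ) (hlam0 : lam ≠ 0) (hlam1 : lam ≠ 1) (hlamL : lam • (1 : Mat n) ∈ L)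
    (σ : Mat n → Jet n)
    (hσjet : ∀ a ∈ L, IsJet (σ a))
    (hσsec : ∀ a ∈ L, (σ a).1 = a)
    (hσhom : ∀ a ∈ L, ∀ b ∈ L, σ (a * b) = jmul (σ a) (σ b)) :
    ∃ k : Arr n, SymArr k ∧ ∀ b ∈ L,
      σ b = jmul (jmul (((1 : Mat n), k) : Jet n) ((b, fun _ _ _ => 0) : Jet n))
              (((1 : Mat n), fun i j l => -(k i j l)) : Jet n) := by
  have hden : lam ^ 2 - lam ≠ 0 := by
    have : lam ^ 2 - lam = lam * (lam - 1) := by ring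
    rw [this]
    exact mul_ne_zero hlam0 (sub_ne_zero.mpr hlam1)
  set c := (σ (lam • 1)).2 with hc
  have hcsym : SymArr c := (hσjet _ hlamL).2
  refine ⟨fun i j l => c i j l / (lam ^ 2 - lam), ?_, ?_⟩
  · intro i j l
    simp only [hcsym i j l]
  · intro b hb
    have hb1 : (σ b).1 = b := hσsec b hb
    have hlam1a : (σ (lam • 1)).1 = lam • 1 := hσsec _ hlamL
    have hcomm : (lam • (1 : Mat n)) * b = b * (lam • 1) := by
      simp [Matrix.smul_mul, Matrix.mul_smul]
    have e1 := hσhom _ hlamL b hb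
    have e2 := hσhom b hb _ hlamL
    rw [hcomm] at e1
    have e4 := congrArg Prod.snd (e1.symm.trans e2)
    simp only [jmul, hb1, hlam1a, ← hc] at e4
    refine Prod.ext ?_ ?_
    · simp [jmul, hb1]
    · funext i j l
      have e5 := congrFun (congrFun (congrFun e4 i) j) l
      simp only [Matrix.smul_apply, Matrix.one_apply, smul_eq_mul, mul_ite, ite_mul,
        mul_zero, zero_mul, mul_one, one_mul, Finset.sum_ite_eq, Finset.sum_ite_eq',
        Finset.mem_univ, if_true] at e5
      simp only [jmul, Matrix.one_apply, mul_ite, ite_mul, mul_zero, zero_mul, mul_one,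
        one_mul, Finset.sum_ite_eq, Finset.sum_ite_eq', Finset.mem_univ, if_true,
        Matrix.one_mul, Matrix.mul_one, Finset.sum_const_zero, zero_add]
      have h1 : (∑ s, ∑ t, c i s t / (lam ^ 2 - lam) * b s j * b t l)
          = (∑ s, ∑ t, c i s t * b s j * b t l) / (lam ^ 2 - lam) := by
        rw [Finset.sum_div]
        refine Finset.sum_congr rfl fun s _ => ?_
        rw [Finset.sum_div]
        refine Finset.sum_congr rfl fun t _ => ?_
        ring
      have h2 : (∑ s, b i s * -(c s j l / (lam ^ 2 - lam)))
          = -((∑ s, b i s * c s j l) / (lam ^ 2 - lam)) := by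
        calc (∑ s, b i s * -(c s j l / (lam ^ 2 - lam)))
            = ∑ s, -(b i s * c s j l) / (lam ^ 2 - lam) := by
              refine Finset.sum_congr rfl fun s _ => by ring
          _ = -((∑ s, b i s * c s j l) / (lam ^ 2 - lam)) := by
              rw [← Finset.sum_div, Finset.sum_neg_distrib, neg_div]
      have key : (σ b).2 i j l * (lam ^ 2 - lam)
          = (∑ s, ∑ t, c i s t * b s j * b t l) - ∑ s, b i s * c s j l := by
        linear_combination -e5
      rw [h1, h2, neg_add_eq_sub, ← sub_div, ← key, mul_div_assoc, div_self hden, mul_one]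
end
end

section
/- For a = (a₁,a₂) and b = (b₁,b₂) in G₂(n), the product a·b⁻¹ lies in ε(O(n)) = {(ξ,0) : ξᵀξ = I} if and only if F(a) = F(b), where F = (F₁,F₂) with F₁(a) = a₁ᵀa₁ and F₂(a)^i_{jk} = Σ_s (a₁⁻¹)^i_s (a₂)^s_{jk}. Equivalently: a·b⁻¹ ∈ ε(O(n)) ⟺ a₁ᵀa₁ = b₁ᵀb₁ and a₁⁻¹a₂ = b₁⁻¹b₂. In particular the fibers of F are exactly the right cosets of ε(O(n)) in G₂(n). -/
open Matrix BigOperators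

noncomputable section

/-- The inverse in G₂(n). -/
def jinv {n : ℕ} (a : Jet n) : Jet n :=
  (a.1⁻¹,
   fun i j k => -∑ s, ∑ t, ∑ r, a.1⁻¹ i s * a.2 s t r * a.1⁻¹ t j * a.1⁻¹ r k)

/-- F₂(a)^i_{jk} = Σ_s (a₁⁻¹)^i_s (a₂)^s_{jk}. -/
def F₂ {n : ℕ} (a : Jet n) : Arr n := fun i j k => ∑ s, a.1⁻¹ i s * a.2 s j k

section G2Aux
variable {n : ℕ}

lemma sum4_comm (f : Fin n → Fin n → Fin n → Fin n → ℝ) :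
    ∑ s, ∑ u, ∑ t, ∑ r, f s u t r = ∑ t, ∑ r, ∑ s, ∑ u, f s u t r :=
  calc ∑ s, ∑ u, ∑ t, ∑ r, f s u t r
      = ∑ s, ∑ t, ∑ u, ∑ r, f s u t r :=
        Finset.sum_congr rfl fun _ _ => Finset.sum_comm
    _ = ∑ t, ∑ s, ∑ u, ∑ r, f s u t r := Finset.sum_comm
    _ = ∑ t, ∑ s, ∑ r, ∑ u, f s u t r :=
        Finset.sum_congr rfl fun _ _ => Finset.sum_congr rfl fun _ _ => Finset.sum_comm
    _ = ∑ t, ∑ r, ∑ s, ∑ u, f s u t r :=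
        Finset.sum_congr rfl fun _ _ => Finset.sum_comm

lemma conj_apply (M P : Mat n) (j k : Fin n) :
    (Pᵀ * M * P) j k = ∑ s, ∑ t, M s t * P s j * P t k := by
  simp only [Matrix.mul_apply, Matrix.transpose_apply, Finset.sum_mul]
  rw [Finset.sum_comm]
  exact Finset.sum_congr rfl fun s _ => Finset.sum_congr rfl fun t _ => by ring

/-- Matrix form of the second component of `a · b⁻¹`. -/
lemma key_prod (a b : Jet n) (i j k : Fin n) :
    (jmul a (jinv b)).2 i j k
      = (b.1⁻¹ᵀ * (Matrix.of fun s t => a.2 i s t - ∑ u, a.1 i u * F₂ b u s t) * b.1⁻¹) j k := by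
  rw [conj_apply]
  simp only [jmul, jinv, F₂, Matrix.of_apply, mul_neg, Finset.sum_neg_distrib, sub_mul,
    Finset.mul_sum, Finset.sum_mul, Finset.sum_sub_distrib]
  rw [neg_add_eq_sub]
  congr 1
  refine (sum4_comm (fun s u t r => a.1 i s * (b.1⁻¹ s u * b.2 u t r * b.1⁻¹ t j * b.1⁻¹ r k))).trans ?_
  refine Finset.sum_congr rfl fun t _ => Finset.sum_congr rfl fun r _ =>
    Finset.sum_congr rfl fun s _ => Finset.sum_congr rfl fun u _ => ?_
  ring

lemma cancel₁ (m : Mat n) (h : IsUnit m.det) (v : Fin n → ℝ) (i : Fin n) :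
    ∑ s, m i s * ∑ u, m⁻¹ s u * v u = v i := by
  have h2 : (m *ᵥ (m⁻¹ *ᵥ v)) i = v i := by
    rw [Matrix.mulVec_mulVec, Matrix.mul_nonsing_inv _ h, Matrix.one_mulVec]
  simpa [Matrix.mulVec, dotProduct] using h2

lemma cancel₂ (m : Mat n) (h : IsUnit m.det) (v : Fin n → ℝ) (i : Fin n) :
    ∑ s, m⁻¹ i s * ∑ u, m s u * v u = v i := by
  have h2 : (m⁻¹ *ᵥ (m *ᵥ v)) i = v i := by
    rw [Matrix.mulVec_mulVec, Matrix.nonsing_inv_mul _ h, Matrix.one_mulVec]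
  simpa [Matrix.mulVec, dotProduct] using h2

end G2Aux

/-- a·b⁻¹ ∈ ε(O(n)) = {(ξ,0) : ξᵀξ = I} iff F(a) = F(b), i.e. iff
a₁ᵀa₁ = b₁ᵀb₁ and a₁⁻¹a₂ = b₁⁻¹b₂; so the fibers of F = (F₁,F₂) are exactly the
right cosets of ε(O(n)). -/
theorem g2_right_cosets_of_epsOn (n : ℕ) (hn : 1 ≤ n) (a b : Jet n)
    (ha : IsJet a) (hb : IsJet b) :
    (∃ ξ : Mat n, ξᵀ * ξ = 1 ∧ jmul a (jinv b) = (ξ, fun _ _ _ => 0)) ↔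
      (a.1ᵀ * a.1 = b.1ᵀ * b.1 ∧ F₂ a = F₂ b) := by
  obtain ⟨hA, -⟩ := ha
  obtain ⟨hB, -⟩ := hb
  have hAd : IsUnit a.1.det := (Matrix.isUnit_iff_isUnit_det _).mp hA
  have hBd : IsUnit b.1.det := (Matrix.isUnit_iff_isUnit_det _).mp hB
  constructor
  · rintro ⟨ξ, hξ, heq⟩
    have h1 : a.1 * b.1⁻¹ = ξ := congrArg Prod.fst heq
    have h2 : (jmul a (jinv b)).2 = fun _ _ _ => 0 := congrArg Prod.snd heq
    have hA1 : a.1 = ξ * b.1 := by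
      rw [← h1, Matrix.mul_assoc, Matrix.nonsing_inv_mul _ hBd, Matrix.mul_one]
    have hM : ∀ i, (Matrix.of fun s t => a.2 i s t - ∑ u, a.1 i u * F₂ b u s t) = (0 : Mat n) := by
      intro i
      have hC : b.1⁻¹ᵀ * (Matrix.of fun s t => a.2 i s t - ∑ u, a.1 i u * F₂ b u s t) * b.1⁻¹
          = 0 := by
        ext j k
        have := congrFun (congrFun (congrFun h2 i) j) k
        rw [key_prod] at this
        simpa using this
      have h3 : b.1ᵀ * b.1⁻¹ᵀ = 1 := by
        rw [← Matrix.transpose_mul, Matrix.nonsing_inv_mul _ hBd, Matrix.transpose_one]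
      calc (Matrix.of fun s t => a.2 i s t - ∑ u, a.1 i u * F₂ b u s t)
          = (b.1ᵀ * b.1⁻¹ᵀ) * (Matrix.of fun s t => a.2 i s t - ∑ u, a.1 i u * F₂ b u s t)
              * (b.1⁻¹ * b.1) := by
            rw [h3, Matrix.nonsing_inv_mul _ hBd, Matrix.one_mul, Matrix.mul_one]
        _ = b.1ᵀ * (b.1⁻¹ᵀ * (Matrix.of fun s t => a.2 i s t - ∑ u, a.1 i u * F₂ b u s t)
              * b.1⁻¹) * b.1 := by simp only [Matrix.mul_assoc]
        _ = 0 := by rw [hC]; simp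
    have ha2 : ∀ i s t, a.2 i s t = ∑ u, a.1 i u * F₂ b u s t := by
      intro i s t
      have := congrFun (congrFun (hM i) s) t
      simpa [sub_eq_zero] using this
    refine ⟨?_, ?_⟩
    · rw [hA1, Matrix.transpose_mul, Matrix.mul_assoc, ← Matrix.mul_assoc ξᵀ ξ b.1, hξ,
        Matrix.one_mul]
    · funext i j k
      simp only [F₂]
      calc ∑ s, a.1⁻¹ i s * a.2 s j k
          = ∑ s, a.1⁻¹ i s * ∑ u, a.1 s u * F₂ b u j k := by
            exact Finset.sum_congr rfl fun s _ => by rw [ha2 s j k]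
        _ = F₂ b i j k := cancel₂ a.1 hAd (fun u => F₂ b u j k) i
        _ = ∑ s, b.1⁻¹ i s * b.2 s j k := rfl
  · rintro ⟨h1, hF⟩
    refine ⟨a.1 * b.1⁻¹, ?_, ?_⟩
    · rw [Matrix.transpose_mul, Matrix.mul_assoc, ← Matrix.mul_assoc a.1ᵀ a.1 b.1⁻¹, h1,
        Matrix.mul_assoc b.1ᵀ, Matrix.mul_nonsing_inv _ hBd, Matrix.mul_one,
        ← Matrix.transpose_mul, Matrix.mul_nonsing_inv _ hBd, Matrix.transpose_one]
    · refine Prod.ext rfl ?_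
      funext i j k
      rw [key_prod]
      have hM : (Matrix.of fun s t => a.2 i s t - ∑ u, a.1 i u * F₂ b u s t) = (0 : Mat n) := by
        ext s t
        simp only [Matrix.of_apply, Matrix.zero_apply, sub_eq_zero]
        rw [show F₂ b = F₂ a from hF.symm]
        simp only [F₂]
        exact (cancel₁ a.1 hAd (fun u => a.2 u s t) i).symm
      rw [hM]
      simp
end
end

section
/- (Schwarzian splitting) The map ε : G₂(1) → G₃(1) defined by ε(a₁,a₂) = (a₁, a₂, (3/2)·a₂²/a₁) is a group homomorphism satisfying π∘ε = id on G₂(1); i.e. for all (a₁,a₂),(b₁,b₂) with a₁ ≠ 0 ≠ b₁, ε((a₁,a₂)(b₁,b₂)) = ε(a₁,a₂)·ε(b₁,b₂) in G₃(1). -/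
noncomputable section

/-- Elements of the model of G₃(1): triples (a₁,a₂,a₃) of reals (with a₁ ≠ 0 for
group elements). -/
abbrev G3 := ℝ × ℝ × ℝ

/-- Multiplication of G₃(1), coming from the chain rule for third-order
derivatives. -/
def g3mul (a b : G3) : G3 :=
  (a.1 * b.1,
   a.1 * b.2.1 + a.2.1 * b.1 ^ 2,
   a.1 * b.2.2 + 3 * a.2.1 * b.1 * b.2.1 + a.2.2 * b.1 ^ 3)

/-- Elements of the model of G₂(1): pairs (a₁,a₂) of reals (with a₁ ≠ 0). -/
abbrev G2 := ℝ × ℝ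

/-- Multiplication of G₂(1). -/
def g2mul (a b : G2) : G2 := (a.1 * b.1, a.1 * b.2 + a.2 * b.1 ^ 2)

/-- The projection π : G₃(1) → G₂(1). -/
def g3proj (a : G3) : G2 := (a.1, a.2.1)

/-- The Schwarzian splitting ε : G₂(1) → G₃(1). -/
def g3eps (a : G2) : G3 := (a.1, a.2, (3 / 2) * a.2 ^ 2 / a.1)

/-- Schwarzian splitting: ε(a₁,a₂) = (a₁,a₂,(3/2)a₂²/a₁) is a group
homomorphism G₂(1) → G₃(1) with π∘ε = id. -/
theorem g3_schwarzian_splitting :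
    (∀ a b : G2, a.1 ≠ 0 → b.1 ≠ 0 →
      g3eps (g2mul a b) = g3mul (g3eps a) (g3eps b)) ∧
    (∀ a : G2, a.1 ≠ 0 → g3proj (g3eps a) = a) := by
  constructor
  · intro a b ha hb
    simp only [g3eps, g2mul, g3mul, Prod.mk.injEq]
    refine ⟨trivial, trivial, ?_⟩
    field_simp
    ring
  · intro a ha
    simp [g3proj, g3eps]
end
end
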